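/- Let X be a complex topological vector space, ι an index set, T : ι → B(X) a family of continuous linear operators, and c, k : ι → ℝ families of strictly positive real numbers with c(i) ≤ k(i) for all i ∈ ι. If x ∈ X is a diskcyclic vector for the set {c(i) · T(i) : i ∈ ι}, then x is a diskcyclic vector for the set {k(i) · T(i) : i ∈ ι}; in particular, if {c(i) · T(i) : i ∈ ι} is diskcyclic then so is {k(i) · T(i) : i ∈ ι}. -/

import Mathlib

/-- If `x` is a diskcyclic vector for `{c i • T i : i ∈ ι}` with `0 < c i ≤ k i`, then
`x` is a diskcyclic vector for `{k i • T i : i ∈ ι}`; in particular if the former set is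
diskcyclic then so is the latter. -/
theorem stmt_3 {X : Type*} [AddCommGroup X] [Module ℂ X] [TopologicalSpace X]
    [IsTopologicalAddGroup X] [ContinuousSMul ℂ X] {ι : Type*}
    (T : ι → X →L[ℂ] X) (c k : ι → ℝ)
    (hc : ∀ i, 0 < c i) (hk : ∀ i, 0 < k i) (hck : ∀ i, c i ≤ k i) :
    (∀ x : X, Dense {y : X | ∃ α : ℂ, ‖α‖ ≤ 1 ∧ ∃ i : ι, y = α • (c i : ℂ) • T i x} →
      Dense {y : X | ∃ α : ℂ, ‖α‖ ≤ 1 ∧ ∃ i : ι, y = α • (k i : ℂ) • T i x}) ∧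
    ((∃ x : X, Dense {y : X | ∃ α : ℂ, ‖α‖ ≤ 1 ∧ ∃ i : ι, y = α • (c i : ℂ) • T i x}) →
      ∃ x : X, Dense {y : X | ∃ α : ℂ, ‖α‖ ≤ 1 ∧ ∃ i : ι, y = α • (k i : ℂ) • T i x}) := by
  have main : ∀ x : X, Dense {y : X | ∃ α : ℂ, ‖α‖ ≤ 1 ∧ ∃ i : ι, y = α • (c i : ℂ) • T i x} →
      Dense {y : X | ∃ α : ℂ, ‖α‖ ≤ 1 ∧ ∃ i : ι, y = α • (k i : ℂ) • T i x} := by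
    intro x hdense
    refine hdense.mono ?_
    rintro y ⟨α, hα, i, rfl⟩
    refine ⟨α * (c i / k i : ℝ), ?_, i, ?_⟩
    · have h1 : ‖((c i / k i : ℝ) : ℂ)‖ ≤ 1 := by
        rw [Complex.norm_real, Real.norm_eq_abs, abs_of_pos (div_pos (hc i) (hk i))]
        exact div_le_one_of_le₀ (hck i) (hk i).le
      calc ‖α * (c i / k i : ℝ)‖ = ‖α‖ * ‖((c i / k i : ℝ) : ℂ)‖ := norm_mul _ _
        _ ≤ 1 * 1 := mul_le_mul hα h1 (norm_nonneg _) zero_le_one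
        _ = 1 := one_mul 1
    · rw [smul_smul, smul_smul]
      have hki : (k i : ℂ) ≠ 0 := by exact_mod_cast (hk i).ne'
      congr 1
      push_cast
      field_simp
  exact ⟨main, fun ⟨x, hx⟩ => ⟨x, main x hx⟩⟩
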